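/- Let P be a regular 2n-gon with a distinguished longest diagonal l (a diameter through two opposite vertices). Then the number of coarsest nontrivial axially symmetric subdivisions of P with respect to l is (n+2)(n-1)/2. Equivalently, the number of reflection-orbits of diagonals d of P such that d is either fixed by the reflection across l or does not cross l is 1 + (n-1) + (n+1)(n-2)/2 = (n+2)(n-1)/2. -/

import Mathlib

/-- `x` lies strictly inside the counterclockwise open arc from `a` to `b`
on the cycle `ℤ/mℤ`. -/
def Betw {m : ℕ} (a b x : ZMod m) : Prop :=
  x ≠ a ∧ (x - a).val < (b - a).val

/-- Two chords of a convex `m`-gon (with vertices `ℤ/mℤ`) cross, i.e. are distinct and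
share interior points: their endpoint sets are disjoint and exactly one endpoint of the
second lies strictly inside one of the open arcs determined by the first. -/
def Crosses {m : ℕ} (p q : Sym2 (ZMod m)) : Prop :=
  ∃ a b c d : ZMod m, p = s(a, b) ∧ q = s(c, d) ∧
    a ≠ c ∧ a ≠ d ∧ b ≠ c ∧ b ≠ d ∧ (Betw a b c ↔ ¬ Betw a b d)

/-- A diagonal of the `m`-gon: an unordered pair of distinct, non-adjacent vertices. -/
def IsDiagonal {m : ℕ} (p : Sym2 (ZMod m)) : Prop :=
  ∃ a b : ZMod m, p = s(a, b) ∧ a ≠ b ∧ a - b ≠ 1 ∧ b - a ≠ 1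

section helpers
variable {n : ℕ}

lemma hNZ (hn : 3 ≤ n) : NeZero (2*n) := ⟨by omega⟩

lemma veq (hn : 3 ≤ n) (x y : ZMod (2*n)) : x = y ↔ x.val = y.val := by
  haveI := hNZ hn
  exact ⟨fun h => h ▸ rfl, fun h => ZMod.val_injective _ h⟩

lemma vlt (hn : 3 ≤ n) (x : ZMod (2*n)) : x.val < 2*n := by
  haveI := hNZ hn; exact ZMod.val_lt x

lemma vzero (hn : 3 ≤ n) : (0 : ZMod (2*n)).val = 0 := by
  haveI := hNZ hn; exact ZMod.val_zero

lemma vn (hn : 3 ≤ n) : ((n : ℕ) : ZMod (2*n)).val = n := by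
  haveI := hNZ hn
  rw [ZMod.val_natCast]; exact Nat.mod_eq_of_lt (by omega)

lemma vnat (hn : 3 ≤ n) (k : ℕ) (hk : k < 2*n) : ((k : ℕ) : ZMod (2*n)).val = k := by
  haveI := hNZ hn
  rw [ZMod.val_natCast]; exact Nat.mod_eq_of_lt hk

lemma vone (hn : 3 ≤ n) : (1 : ZMod (2*n)).val = 1 := by
  have := vnat hn 1 (by omega); simpa using this

lemma vneg (hn : 3 ≤ n) (x : ZMod (2*n)) : (-x).val = if x.val = 0 then 0 else 2*n - x.val := by
  haveI := hNZ hn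
  rw [ZMod.neg_val]
  by_cases h : x = 0
  · simp [h]
  · rw [if_neg h, if_neg (fun hv => h ((ZMod.val_eq_zero x).mp hv))]

lemma vsub (hn : 3 ≤ n) (x y : ZMod (2*n)) :
    (x - y).val = if y.val ≤ x.val then x.val - y.val else 2*n + x.val - y.val := by
  haveI := hNZ hn
  by_cases h : y.val ≤ x.val
  · rw [if_pos h, ZMod.val_sub h]
  · rw [if_neg h]
    have hxy : x ≠ y := by
      intro he; exact h (le_of_eq (he ▸ rfl))
    have : x - y = -(y - x) := by ring
    rw [this, vneg hn, ZMod.val_sub (le_of_not_ge h)]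
    have h1 : y.val - x.val ≠ 0 := by omega
    rw [if_neg h1]
    have := vlt hn y
    omega

lemma betw_iff (hn : 3 ≤ n) (a b x : ZMod (2*n)) :
    Betw a b x ↔ (x.val ≠ a.val ∧
      (if a.val ≤ x.val then x.val - a.val else 2*n + x.val - a.val) <
      (if a.val ≤ b.val then b.val - a.val else 2*n + b.val - a.val)) := by
  unfold Betw
  rw [vsub hn, vsub hn, Ne, Ne, veq hn]


lemma mixed_symm {n : ℕ} (hn : 3 ≤ n) (a b x : ZMod (2*n)) :
    True := trivial

lemma crosses_iff {n : ℕ} (hn : 3 ≤ n) (a b : ZMod (2*n)) :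
    Crosses s(a, b) s((0 : ZMod (2*n)), ((n : ℕ) : ZMod (2*n))) ↔
      ((0 < a.val ∧ a.val < n ∧ n < b.val) ∨ (0 < b.val ∧ b.val < n ∧ n < a.val)) := by
  have hva := vlt hn a
  have hvb := vlt hn b
  constructor
  · rintro ⟨a', b', c', d', hp, hq, h1, h2, h3, h4, hbetw⟩
    rcases Sym2.eq_iff.mp hp with ⟨rfl, rfl⟩ | ⟨rfl, rfl⟩ <;>
      rcases Sym2.eq_iff.mp hq with ⟨rfl, rfl⟩ | ⟨rfl, rfl⟩ <;>
      rw [Ne, veq hn] at h1 h2 h3 h4 <;>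
      rw [betw_iff hn, betw_iff hn] at hbetw <;>
      simp only [vzero hn, vn hn] at h1 h2 h3 h4 hbetw ⊢ <;>
      [skip; skip; skip; skip] <;>
      revert hbetw <;> split_ifs <;> omega
  · rintro (⟨h1, h2, h3⟩ | ⟨h1, h2, h3⟩)
    · refine ⟨a, b, 0, (n : ℕ), rfl, rfl, ?_, ?_, ?_, ?_, ?_⟩ <;>
        [rw [Ne, veq hn]; rw [Ne, veq hn]; rw [Ne, veq hn]; rw [Ne, veq hn];
         rw [betw_iff hn, betw_iff hn]] <;>
        simp only [vzero hn, vn hn] <;> [omega; omega; omega; omega; skip] <;>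
        split_ifs <;> omega
    · refine ⟨a, b, 0, (n : ℕ), rfl, rfl, ?_, ?_, ?_, ?_, ?_⟩ <;>
        [rw [Ne, veq hn]; rw [Ne, veq hn]; rw [Ne, veq hn]; rw [Ne, veq hn];
         rw [betw_iff hn, betw_iff hn]] <;>
        simp only [vzero hn, vn hn] <;> [omega; omega; omega; omega; skip] <;>
        split_ifs <;> omega

/-- The "folded" value of a vertex: distance to the nearer of `0,n` endpoints along vals. -/
def mval (n : ℕ) (x : ZMod (2*n)) : ℕ := min x.val (2*n - x.val)

lemma mval_neg {n : ℕ} (hn : 3 ≤ n) (x : ZMod (2*n)) : mval n (-x) = mval n x := by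
  have := vlt hn x
  unfold mval
  rw [vneg hn]
  split_ifs with h <;> omega

lemma mval_eq_iff {n : ℕ} (hn : 3 ≤ n) (x y : ZMod (2*n)) :
    mval n x = mval n y ↔ (y = x ∨ y = -x) := by
  have hx := vlt hn x
  have hy := vlt hn y
  rw [veq hn, veq hn, vneg hn]
  unfold mval
  split_ifs with h <;> omega

lemma self_neg_iff {n : ℕ} (hn : 3 ≤ n) (x : ZMod (2*n)) :
    x = -x ↔ (x.val = 0 ∨ x.val = n) := by
  have hx := vlt hn x
  rw [veq hn, vneg hn]
  split_ifs with h <;> omega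

lemma refl_pair {n : ℕ} (a b : ZMod (2*n)) :
    Sym2.map (fun x : ZMod (2*n) => -x) s(a, b) = s(-a, -b) := by
  simp

/-- if `s(a,b)` is an allowed chord then either `b = -a` or `a,b` do not lie strictly
on opposite sides of the axis. -/
lemma sides_of_allowed {n : ℕ} (hn : 3 ≤ n) (a b : ZMod (2*n))
    (hallow : Sym2.map (fun x : ZMod (2*n) => -x) s(a, b) = s(a, b) ∨
      ¬ Crosses s(a, b) s((0 : ZMod (2*n)), ((n : ℕ) : ZMod (2*n)))) :
    b = -a ∨ ¬ ((0 < a.val ∧ a.val < n ∧ n < b.val) ∨ (0 < b.val ∧ b.val < n ∧ n < a.val)) := by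
  rcases hallow with hfix | hcr
  · rw [refl_pair] at hfix
    rcases Sym2.eq_iff.mp hfix with ⟨h1, h2⟩ | ⟨h1, h2⟩
    · right
      have ha := (self_neg_iff hn a).mp h1.symm
      have hb := (self_neg_iff hn b).mp h2.symm
      omega
    · left; exact h1.symm
  · right; exact fun h => hcr ((crosses_iff hn a b).mpr h)

lemma inj_core {n : ℕ} (hn : 3 ≤ n) (a b c e : ZMod (2*n))
    (hab : a ≠ b) (hce : c ≠ e)
    (hallow1 : Sym2.map (fun x : ZMod (2*n) => -x) s(a, b) = s(a, b) ∨
      ¬ Crosses s(a, b) s((0 : ZMod (2*n)), ((n : ℕ) : ZMod (2*n))))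
    (hallow2 : Sym2.map (fun x : ZMod (2*n) => -x) s(c, e) = s(c, e) ∨
      ¬ Crosses s(c, e) s((0 : ZMod (2*n)), ((n : ℕ) : ZMod (2*n))))
    (hma : mval n c = mval n a) (hmb : mval n e = mval n b) :
    s(c, e) = s(a, b) ∨ s(c, e) = Sym2.map (fun x : ZMod (2*n) => -x) s(a, b) := by
  rw [refl_pair]
  have hva := vlt hn a
  have hvb := vlt hn b
  rcases (mval_eq_iff hn a c).mp hma.symm with rfl | rfl <;>
    rcases (mval_eq_iff hn b e).mp hmb.symm with rfl | rfl
  · exact Or.inl rfl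
  · -- branch: second chord is s(c, -b) with c playing a
    by_cases hbb : b = -b
    · left; rw [← hbb]
    by_cases haa : c = -c
    · right; rw [← haa]
    exfalso
    have s1 := sides_of_allowed hn c b hallow1
    have s2 := sides_of_allowed hn c (-b) hallow2
    rcases s1 with h1 | h1
    · exact hce (by rw [h1, neg_neg])
    rcases s2 with h2 | h2
    · exact hab (neg_injective h2).symm
    have haa' : ¬ (c.val = 0 ∨ c.val = n) := fun h => haa ((self_neg_iff hn c).mpr h)
    have hbb' : ¬ (b.val = 0 ∨ b.val = n) := fun h => hbb ((self_neg_iff hn b).mpr h)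
    rw [vneg hn] at h2
    revert h2; split_ifs <;> omega
  · -- branch: second chord is s(-a, e) with e playing b
    by_cases haa : a = -a
    · left; rw [← haa]
    by_cases hbb : e = -e
    · right; rw [← hbb]
    exfalso
    have s1 := sides_of_allowed hn a e hallow1
    have s2 := sides_of_allowed hn (-a) e hallow2
    rcases s1 with h1 | h1
    · exact hce (by rw [← h1])
    rcases s2 with h2 | h2
    · exact hab (by rw [h2, neg_neg])
    have haa' : ¬ (a.val = 0 ∨ a.val = n) := fun h => haa ((self_neg_iff hn a).mpr h)
    have hbb' : ¬ (e.val = 0 ∨ e.val = n) := fun h => hbb ((self_neg_iff hn e).mpr h)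
    rw [vneg hn] at h2
    revert h2; split_ifs <;> omega
  · exact Or.inr rfl

def acond (n : ℕ) (p : ℕ × ℕ) : Prop :=
  (p.1 = p.2 ∧ 0 < p.1 ∧ p.1 < n) ∨ (p.1 + 2 ≤ p.2 ∧ p.2 ≤ n)

instance (n : ℕ) : DecidablePred (acond n) := fun _ => by unfold acond; infer_instance

lemma mem_cond {n : ℕ} (hn : 3 ≤ n) (a b : ZMod (2*n)) (hab : a ≠ b)
    (hd1 : a - b ≠ 1) (hd2 : b - a ≠ 1)
    (hallow : Sym2.map (fun x : ZMod (2*n) => -x) s(a, b) = s(a, b) ∨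
      ¬ Crosses s(a, b) s((0 : ZMod (2*n)), ((n : ℕ) : ZMod (2*n)))) :
    acond n (min (mval n a) (mval n b), max (mval n a) (mval n b)) := by
  have hva := vlt hn a
  have hvb := vlt hn b
  have hab' : a.val ≠ b.val := fun h => hab ((veq hn a b).mpr h)
  rw [Ne, veq hn, vsub hn, vone hn] at hd1 hd2
  rcases sides_of_allowed hn a b hallow with rfl | hnm
  · have hax : ¬ (a.val = 0 ∨ a.val = n) := fun h => hab ((self_neg_iff hn a).mpr h)
    rw [mval_neg hn]
    unfold acond mval
    dsimp only
    omega
  · unfold acond mval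
    dsimp only
    revert hd1 hd2
    split_ifs <;> omega

lemma gauss (N : ℕ) : (∑ y ∈ Finset.range (N+1), (y-1)) * 2 = N*(N-1) := by
  induction N with
  | zero => simp
  | succ k ih =>
    rw [Finset.sum_range_succ, Nat.add_mul, ih, Nat.succ_sub_one]
    cases k with
    | zero => simp
    | succ m => simp [Nat.succ_sub_one]; ring

lemma count_cond (n : ℕ) (hn : 3 ≤ n) :
    Nat.card {p : ℕ × ℕ // acond n p} = (n + 2) * (n - 1) / 2 := by
  classical
  set T : Finset (ℕ × ℕ) :=
    (Finset.range (n+1) ×ˢ Finset.range (n+1)).filter (acond n) with hT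
  have hequiv : {p : ℕ × ℕ // acond n p} ≃ {p // p ∈ T} := by
    apply Equiv.subtypeEquivRight
    intro p
    rw [hT, Finset.mem_filter, Finset.mem_product, Finset.mem_range, Finset.mem_range]
    unfold acond
    omega
  rw [Nat.card_congr hequiv, Nat.card_eq_finsetCard]
  rw [Finset.card_eq_sum_card_fiberwise (f := Prod.snd) (t := Finset.range (n+1))
    (by intro x hx; rw [hT, Finset.mem_coe, Finset.mem_filter, Finset.mem_product] at hx
        exact hx.1.2)]
  have hfib : ∀ y ∈ Finset.range (n+1),
      (T.filter fun p => p.2 = y).card = (if 0 < y ∧ y < n then 1 else 0) + (y - 1) := by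
    intro y hy
    rw [Finset.mem_range] at hy
    have himg : T.filter (fun p => p.2 = y) =
        ((Finset.range (n+1)).filter (fun x => acond n (x, y))).image (fun x => (x, y)) := by
      ext ⟨u, v⟩
      simp only [hT, Finset.mem_filter, Finset.mem_product, Finset.mem_range,
        Finset.mem_image]
      constructor
      · rintro ⟨⟨⟨hu, hv⟩, hc⟩, rfl⟩
        exact ⟨u, ⟨hu, hc⟩, rfl⟩
      · rintro ⟨x, ⟨hx, hc⟩, he⟩
        rw [Prod.mk.injEq] at he
        obtain ⟨rfl, rfl⟩ := he
        exact ⟨⟨⟨hx, hy⟩, hc⟩, rfl⟩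
    rw [himg, Finset.card_image_of_injective _ (fun a b h => by simpa using h)]
    have hsplit : (Finset.range (n+1)).filter (fun x => acond n (x, y)) =
        ((Finset.range (n+1)).filter (fun x => x = y ∧ 0 < x ∧ x < n)) ∪
        ((Finset.range (n+1)).filter (fun x => x + 2 ≤ y ∧ y ≤ n)) := by
      rw [← Finset.filter_or]
      apply Finset.filter_congr
      intro x _
      unfold acond
      rfl
    rw [hsplit, Finset.card_union_of_disjoint (by
      rw [Finset.disjoint_left]
      intro x hx1 hx2
      rw [Finset.mem_filter] at hx1 hx2
      omega)]
    congr 1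
    · by_cases hc : 0 < y ∧ y < n
      · rw [if_pos hc]
        have : (Finset.range (n+1)).filter (fun x => x = y ∧ 0 < x ∧ x < n) = {y} := by
          ext x
          simp only [Finset.mem_filter, Finset.mem_range, Finset.mem_singleton]
          omega
        rw [this, Finset.card_singleton]
      · rw [if_neg hc]
        have : (Finset.range (n+1)).filter (fun x => x = y ∧ 0 < x ∧ x < n) = ∅ := by
          ext x
          simp only [Finset.mem_filter, Finset.mem_range, Finset.notMem_empty, iff_false]
          omega
        rw [this, Finset.card_empty]
    · have : (Finset.range (n+1)).filter (fun x => x + 2 ≤ y ∧ y ≤ n) =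
          Finset.range (y - 1) := by
        ext x
        simp only [Finset.mem_filter, Finset.mem_range]
        omega
      rw [this, Finset.card_range]
  rw [Finset.sum_congr rfl hfib, Finset.sum_add_distrib]
  have e1 : (∑ y ∈ Finset.range (n+1), (if 0 < y ∧ y < n then 1 else 0)) = n - 1 := by
    have h1 : (Finset.range (n+1)).filter (fun y => 0 < y ∧ y < n) = Finset.Ico 1 n := by
      ext x
      simp only [Finset.mem_filter, Finset.mem_range, Finset.mem_Ico]
      omega
    rw [Finset.sum_boole, h1, Nat.cast_id, Nat.card_Ico]
  have e2 := gauss n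
  have e3 : (n + 2) * (n - 1) = (∑ y ∈ Finset.range (n+1), (y-1)) * 2 + 2 * (n - 1) := by
    rw [e2]
    cases n with
    | zero => simp
    | succ m => simp [Nat.succ_sub_one]; ring
  rw [e1, e3]
  omega

/-- In a regular `2n`-gon (`n ≥ 3`) with distinguished longest diagonal
`l = {0, n}` and reflection `x ↦ -x` across `l`, the number of reflection-orbits of
diagonals `d` such that `d` is fixed by the reflection or does not cross `l`
(equivalently, the number of coarsest nontrivial axially symmetric subdivisions)
is `(n+2)(n-1)/2`. -/
theorem coarsest_axially_symmetric_subdivisions_count (n : ℕ) (hn : 3 ≤ n) :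
    let refl : Sym2 (ZMod (2 * n)) → Sym2 (ZMod (2 * n)) := Sym2.map (fun x => -x)
    let l : Sym2 (ZMod (2 * n)) := s((0 : ZMod (2 * n)), (n : ZMod (2 * n)))
    Nat.card (Quot (fun d d' : {d : Sym2 (ZMod (2 * n)) //
        IsDiagonal d ∧ (refl d = d ∨ ¬ Crosses d l)} =>
      d'.1 = d.1 ∨ d'.1 = refl d.1)) = (n + 2) * (n - 1) / 2 := by
  intro refl l
  haveI : NeZero (2 * n) := ⟨by omega⟩
  classical
  -- the folding map
  let g : Sym2 (ZMod (2 * n)) → ℕ × ℕ := Sym2.lift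
    ⟨fun a b => (min (mval n a) (mval n b), max (mval n a) (mval n b)),
     fun a b => by simp [min_comm, max_comm]⟩
  have hg : ∀ a b : ZMod (2 * n),
      g s(a, b) = (min (mval n a) (mval n b), max (mval n a) (mval n b)) := fun _ _ => rfl
  have hrefl : ∀ a b : ZMod (2 * n), refl s(a, b) = s(-a, -b) := fun a b => refl_pair a b
  have hgrefl : ∀ d : Sym2 (ZMod (2 * n)), g (refl d) = g d := by
    intro d
    induction d using Sym2.ind with
    | _ a b => rw [hrefl, hg, hg, mval_neg hn, mval_neg hn]
  have hmem : ∀ d : {d : Sym2 (ZMod (2 * n)) //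
      IsDiagonal d ∧ (refl d = d ∨ ¬ Crosses d l)}, acond n (g d.1) := by
    rintro ⟨d, hdiag, hallow⟩
    obtain ⟨a, b, rfl, h1, h2, h3⟩ := hdiag
    rw [hg]
    exact mem_cond hn a b h1 h2 h3 hallow
  let F : Quot (fun d d' : {d : Sym2 (ZMod (2 * n)) //
        IsDiagonal d ∧ (refl d = d ∨ ¬ Crosses d l)} =>
      d'.1 = d.1 ∨ d'.1 = refl d.1) → {p : ℕ × ℕ // acond n p} :=
    Quot.lift (fun d => ⟨g d.1, hmem d⟩) (by
      rintro d d' (h | h) <;> apply Subtype.ext <;> dsimp only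
      · rw [h]
      · rw [h, hgrefl])
  have hFmk : ∀ d, F (Quot.mk _ d) = ⟨g d.1, hmem d⟩ := fun _ => rfl
  have hinj : Function.Injective F := by
    intro x y
    induction x using Quot.ind with | _ d =>
    induction y using Quot.ind with | _ d' =>
    intro h
    rw [hFmk, hFmk] at h
    have hgg : g d.1 = g d'.1 := congrArg Subtype.val h
    apply Quot.sound
    obtain ⟨p, hdiag, hallow⟩ := d
    obtain ⟨p', hdiag', hallow'⟩ := d'
    dsimp only at hgg ⊢
    obtain ⟨a, b, rfl, hab, _, _⟩ := hdiag
    obtain ⟨c, e, rfl, hce, _, _⟩ := hdiag'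
    rw [hg, hg, Prod.mk.injEq] at hgg
    obtain ⟨hmin, hmax⟩ := hgg
    have hcase : (mval n c = mval n a ∧ mval n e = mval n b) ∨
        (mval n c = mval n b ∧ mval n e = mval n a) := by omega
    rcases hcase with ⟨hma, hmb⟩ | ⟨hma, hmb⟩
    · exact inj_core hn a b c e hab hce hallow hallow' hma hmb
    · have := inj_core hn b a c e (Ne.symm hab) hce
        (by rwa [Sym2.eq_swap (a := b)]) hallow' hma hmb
      rw [Sym2.eq_swap (a := b)] at this
      exact this
  have hsurj : Function.Surjective F := by
    rintro ⟨⟨x, y⟩, hc⟩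
    rcases hc with ⟨h1, h2, h3⟩ | ⟨h1, h2⟩
    · -- perpendicular diagonal s(x, -x)
      dsimp only at h1 h2 h3
      subst h1
      have hvx : ((x : ℕ) : ZMod (2 * n)).val = x := vnat hn x (by omega)
      have hne : ((x : ℕ) : ZMod (2 * n)) ≠ -((x : ℕ) : ZMod (2 * n)) := by
        intro h
        have := (self_neg_iff hn _).mp h
        omega
      have hdiag : IsDiagonal s(((x : ℕ) : ZMod (2 * n)), -((x : ℕ) : ZMod (2 * n))) := by
        refine ⟨_, _, rfl, hne, ?_, ?_⟩ <;>
          rw [Ne, veq hn, vsub hn, vone hn, vneg hn, hvx] <;>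
          split_ifs <;> omega
      have hfix : refl s(((x : ℕ) : ZMod (2 * n)), -((x : ℕ) : ZMod (2 * n))) =
          s(((x : ℕ) : ZMod (2 * n)), -((x : ℕ) : ZMod (2 * n))) := by
        rw [hrefl, neg_neg, Sym2.eq_swap]
      refine ⟨Quot.mk _ ⟨_, hdiag, Or.inl hfix⟩, ?_⟩
      rw [hFmk]
      apply Subtype.ext
      dsimp only
      rw [hg, mval_neg hn]
      have : mval n ((x : ℕ) : ZMod (2 * n)) = x := by
        unfold mval; rw [hvx]; omega
      rw [this]
      simp
    · -- ordinary chord s(x, y) on the closed half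
      have hvx : ((x : ℕ) : ZMod (2 * n)).val = x := vnat hn x (by omega)
      have hvy : ((y : ℕ) : ZMod (2 * n)).val = y := vnat hn y (by omega)
      have hne : ((x : ℕ) : ZMod (2 * n)) ≠ ((y : ℕ) : ZMod (2 * n)) := by
        rw [Ne, veq hn, hvx, hvy]; omega
      have hdiag : IsDiagonal s(((x : ℕ) : ZMod (2 * n)), ((y : ℕ) : ZMod (2 * n))) := by
        refine ⟨_, _, rfl, hne, ?_, ?_⟩ <;>
          rw [Ne, veq hn, vsub hn, vone hn, hvx, hvy] <;>
          split_ifs <;> omega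
      have hncr : ¬ Crosses s(((x : ℕ) : ZMod (2 * n)), ((y : ℕ) : ZMod (2 * n))) l := by
        intro h
        have := (crosses_iff hn _ _).mp h
        rw [hvx, hvy] at this
        omega
      refine ⟨Quot.mk _ ⟨_, hdiag, Or.inr hncr⟩, ?_⟩
      rw [hFmk]
      apply Subtype.ext
      dsimp only
      rw [hg]
      have e1 : mval n ((x : ℕ) : ZMod (2 * n)) = x := by unfold mval; rw [hvx]; omega
      have e2 : mval n ((y : ℕ) : ZMod (2 * n)) = y := by unfold mval; rw [hvy]; omega
      rw [e1, e2, Prod.mk.injEq]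
      constructor <;> omega
  rw [Nat.card_congr (Equiv.ofBijective F ⟨hinj, hsurj⟩)]
  exact count_cond n hn
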